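/- If every finitely generated lower set in Λ* is MacNeille closed, then each pair of letters of Λ that is bounded below in Λ is also bounded above in Λ. Equivalently (contrapositive): if there exist letters α, β, λ ∈ Λ with λ < α, λ < β, and α, β having no common upper bound in Λ, then the lower set ↓{α, β} of Λ* is not closed. -/
import Mathlib


/-- The Higman ordering on words over an ordered alphabet `Λ`:
`x ≤ y` iff `y` has a subword that is letterwise above `x`. -/
def HigmanLE {Λ : Type*} [PartialOrder Λ] (x y : List Λ) : Prop :=
  List.SublistForall₂ (· ≤ ·) x y

/-- The strict Higman ordering. -/
def HigmanLT {Λ : Type*} [PartialOrder Λ] (x y : List Λ) : Prop :=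
  HigmanLE x y ∧ ¬ HigmanLE y x

/-- The upper cone `X^Δ` of a set of words. -/
def upperCone {Λ : Type*} [PartialOrder Λ] (X : Set (List Λ)) : Set (List Λ) :=
  {y | ∀ x ∈ X, HigmanLE x y}

/-- The lower cone `X^∇` of a set of words. -/
def lowerCone {Λ : Type*} [PartialOrder Λ] (X : Set (List Λ)) : Set (List Λ) :=
  {y | ∀ x ∈ X, HigmanLE y x}

/-- Elementwise concatenation `XY` of two sets of words. -/
def concatSet {Λ : Type*} (X Y : Set (List Λ)) : Set (List Λ) :=
  {w | ∃ x ∈ X, ∃ y ∈ Y, w = x ++ y}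

/-- A (MacNeille) closed upper set of words: `Z = Z^{∇Δ}`. -/
def ClosedUpper {Λ : Type*} [PartialOrder Λ] (Z : Set (List Λ)) : Prop :=
  Z = upperCone (lowerCone Z)

/-- A (MacNeille) closed lower set of words: `W = W^{Δ∇}`. -/
def ClosedLower {Λ : Type*} [PartialOrder Λ] (W : Set (List Λ)) : Prop :=
  W = lowerCone (upperCone W)

/-- An upper set of words with respect to the Higman ordering. -/
def IsUpperWordSet {Λ : Type*} [PartialOrder Λ] (Z : Set (List Λ)) : Prop :=
  ∀ x y : List Λ, HigmanLE x y → x ∈ Z → y ∈ Z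

/-- A finitely generated lower set of words. -/
def FinGenLowerWords {Λ : Type*} [PartialOrder Λ] (S : Set (List Λ)) : Prop :=
  ∃ F : Finset (List Λ), S = {x | ∃ w ∈ F, HigmanLE x w}

/-- A finitely generated lower set of letters. -/
def FinGenLowerLetters {Λ : Type*} [PartialOrder Λ] (S : Set Λ) : Prop :=
  ∃ F : Finset Λ, S = {x | ∃ w ∈ F, x ≤ w}

/-- Well-foundedness: no infinite strictly decreasing sequence. -/
def NoInfiniteDescent {Λ : Type*} [PartialOrder Λ] : Prop :=
  ¬ ∃ f : ℕ → Λ, ∀ n, f (n + 1) < f n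

/-- Stability under the cancellation rule. -/
def StableCancel {Λ : Type*} [PartialOrder Λ] (Z : Set (List Λ)) : Prop :=
  ∀ (y z : List Λ) (α β : Λ), (¬ ∃ c, c ≤ α ∧ c ≤ β) →
    y ++ α :: z ∈ Z → y ++ β :: z ∈ Z → y ++ z ∈ Z

/-- Stability under the reduction rule. -/
def StableReduce {Λ : Type*} [PartialOrder Λ] (Z : Set (List Λ)) : Prop :=
  ∀ (y z : List Λ) (α γ : Λ), α < γ →
    y ++ α :: α :: z ∈ Z → y ++ γ :: z ∈ Z → y ++ α :: z ∈ Z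

/-- Stability under the permutation rule. -/
def StablePerm {Λ : Type*} [PartialOrder Λ] (Z : Set (List Λ)) : Prop :=
  ∀ (y z : List Λ) (α β γ : Λ), ¬ α ≤ β → ¬ β ≤ α → α < γ → β < γ →
    y ++ α :: β :: z ∈ Z → y ++ γ :: z ∈ Z → y ++ β :: α :: z ∈ Z

/-- Stability under the meet rule. -/
def StableMeet {Λ : Type*} [PartialOrder Λ] (Z : Set (List Λ)) : Prop :=
  ∀ (y z : List Λ) (α β m : Λ), ¬ α ≤ β → ¬ β ≤ α →
    IsGLB ({α, β} : Set Λ) m →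
    y ++ α :: z ∈ Z → y ++ β :: z ∈ Z → y ++ m :: z ∈ Z

/-- Stability under all four rules. -/
def StableAll {Λ : Type*} [PartialOrder Λ] (Z : Set (List Λ)) : Prop :=
  StableCancel Z ∧ StableReduce Z ∧ StablePerm Z ∧ StableMeet Z

/-- `[Y]`: the smallest upper set containing `Y` that is stable under the four rules. -/
def stableClosure {Λ : Type*} [PartialOrder Λ] (Y : Set (List Λ)) : Set (List Λ) :=
  ⋂₀ {Z : Set (List Λ) | Y ⊆ Z ∧ IsUpperWordSet Z ∧ StableAll Z}

lemma higman_refl {Λ : Type*} [PartialOrder Λ] (x : List Λ) : HigmanLE x x := by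
  induction x with
  | nil => exact List.SublistForall₂.nil
  | cons a t ih => exact List.SublistForall₂.cons le_rfl ih

lemma pair_sublist {α : Type*} {a b : α} : ∀ {y : List α}, a ∈ y → b ∈ y → a ≠ b →
    List.Sublist [a, b] y ∨ List.Sublist [b, a] y := by
  intro y
  induction y with
  | nil => simp
  | cons c t ih =>
    intro ha hb hne
    rcases List.mem_cons.1 ha with h1 | h1
    · subst h1
      have hb' : b ∈ t := by
        rcases List.mem_cons.1 hb with h | h
        · exact absurd h.symm hne
        · exact h
      exact Or.inl (List.Sublist.cons₂ _ (List.singleton_sublist.2 hb'))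
    · rcases List.mem_cons.1 hb with h2 | h2
      · subst h2
        exact Or.inr (List.Sublist.cons₂ _ (List.singleton_sublist.2 h1))
      · rcases ih h1 h2 hne with h | h
        · exact Or.inl (h.cons _)
        · exact Or.inr (h.cons _)

lemma not_closed_aux {Λ : Type*} [PartialOrder Λ] (α β l : Λ) (hlα : l < α) (hlβ : l < β)
    (hnu : ¬ ∃ u, α ≤ u ∧ β ≤ u) :
    ¬ ClosedLower {x : List Λ | HigmanLE x [α] ∨ HigmanLE x [β]} := by
  intro hcl
  set W : Set (List Λ) := {x : List Λ | HigmanLE x [α] ∨ HigmanLE x [β]} with hW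
  -- [l, l] ∉ W
  have hll_notW : [l, l] ∉ W := by
    intro h
    have hlen : ∀ γ : Λ, ¬ HigmanLE [l, l] [γ] := by
      intro γ hle
      rcases List.sublistForall₂_iff.1 hle with ⟨l', hf, hs⟩
      have h2 : l'.length = 2 := (List.Forall₂.length_eq hf).symm
      have h1 : l'.length ≤ 1 := hs.length_le
      omega
    rcases h with h | h
    · exact hlen α h
    · exact hlen β h
  -- [l, l] ∈ lowerCone (upperCone W)
  have hll_in : [l, l] ∈ lowerCone (upperCone W) := by
    intro y hy
    have hαy : HigmanLE [α] y := hy [α] (Or.inl (higman_refl _))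
    have hβy : HigmanLE [β] y := hy [β] (Or.inr (higman_refl _))
    rcases List.sublistForall₂_iff.1 hαy with ⟨la, hfa, hsa⟩
    rcases List.sublistForall₂_iff.1 hβy with ⟨lb, hfb, hsb⟩
    rcases List.forall₂_cons_left_iff.1 hfa with ⟨a, la', hαa, hfa', rfl⟩
    rcases List.forall₂_cons_left_iff.1 hfb with ⟨b, lb', hβb, hfb', rfl⟩
    have hla' : la' = [] := List.forall₂_nil_left_iff.1 hfa'
    have hlb' : lb' = [] := List.forall₂_nil_left_iff.1 hfb'
    subst hla'; subst hlb'
    have ha : a ∈ y := hsa.subset (by simp)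
    have hb : b ∈ y := hsb.subset (by simp)
    have hab : a ≠ b := by
      rintro rfl
      exact hnu ⟨a, hαa, hβb⟩
    have hla : l ≤ a := le_of_lt (lt_of_lt_of_le hlα hαa)
    have hlb : l ≤ b := le_of_lt (lt_of_lt_of_le hlβ hβb)
    rcases pair_sublist ha hb hab with hs | hs
    · exact List.sublistForall₂_iff.2 ⟨[a, b], List.forall₂_cons.2 ⟨hla,
        List.forall₂_cons.2 ⟨hlb, List.Forall₂.nil⟩⟩, hs⟩
    · exact List.sublistForall₂_iff.2 ⟨[b, a], List.forall₂_cons.2 ⟨hlb,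
        List.forall₂_cons.2 ⟨hla, List.Forall₂.nil⟩⟩, hs⟩
  rw [ClosedLower] at hcl
  exact hll_notW (hcl ▸ hll_in)

/-- if every finitely generated lower set in `Λ*` is closed, then every
pair of letters bounded below in `Λ` is also bounded above in `Λ`; equivalently
(contrapositive), if `l < α`, `l < β` and `α, β` have no common upper bound, then the
lower set `↓{α, β}` of `Λ*` is not closed. -/
theorem finGen_closed_necessary {Λ : Type*} [PartialOrder Λ] :
    ((∀ S : Set (List Λ), FinGenLowerWords S → ClosedLower S) →
      ∀ α β : Λ, (∃ c, c ≤ α ∧ c ≤ β) → ∃ u, α ≤ u ∧ β ≤ u) ∧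
    (∀ α β l : Λ, l < α → l < β → (¬ ∃ u, α ≤ u ∧ β ≤ u) →
      ¬ ClosedLower {x : List Λ | HigmanLE x [α] ∨ HigmanLE x [β]}) := by
  constructor
  · intro H α β ⟨c, hcα, hcβ⟩
    by_cases hαβ : α ≤ β
    · exact ⟨β, hαβ, le_rfl⟩
    by_cases hβα : β ≤ α
    · exact ⟨α, le_rfl, hβα⟩
    by_contra hnu
    classical
    have hcα' : c < α := lt_of_le_of_ne hcα (by rintro rfl; exact hαβ hcβ)
    have hcβ' : c < β := lt_of_le_of_ne hcβ (by rintro rfl; exact hβα hcα)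
    apply not_closed_aux α β c hcα' hcβ' hnu
    apply H
    refine ⟨{[α], [β]}, ?_⟩
    ext x
    simp [Set.mem_setOf_eq]
  · exact fun α β l h1 h2 h3 => not_closed_aux α β l h1 h2 h3
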